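/- Let G be a connected graph with |V(G)| > 1 whose complement is also connected, and let 𝓜 be the partition of V(G) into maximal strong modules. Then the quotient graph G/𝓜 is prime, i.e., all its modules are trivial. -/

import Mathlib

open SimpleGraph Set

variable {V : Type*}

/-- Open neighborhood of a set: vertices outside `A` with a neighbor in `A`. -/
def nbhdSet (G : SimpleGraph V) (A : Set V) : Set V :=
  {v | v ∉ A ∧ ∃ u ∈ A, G.Adj u v}

/-- Union of closed neighborhoods of vertices of `X`. -/
def closedNbhd (G : SimpleGraph V) (X : Set V) : Set V :=
  X ∪ {v | ∃ u ∈ X, G.Adj u v}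

/-- `A` is a connected component of `G - S`. -/
def IsCompOutside (G : SimpleGraph V) (S A : Set V) : Prop :=
  A.Nonempty ∧ Disjoint A S ∧ (G.induce A).Connected ∧
    ∀ u ∈ A, ∀ v, v ∉ A → v ∉ S → ¬ G.Adj u v

/-- `A` is a full component of `G - S`, i.e. `N(A) = S`. -/
def IsFullComp (G : SimpleGraph V) (S A : Set V) : Prop :=
  IsCompOutside G S A ∧ nbhdSet G A = S

/-- `S` is a minimal separator: it has at least two full components. -/
def IsMinSep (G : SimpleGraph V) (S : Set V) : Prop :=
  ∃ A B : Set V, A ≠ B ∧ IsFullComp G S A ∧ IsFullComp G S B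

/-- `f` is an induced copy of the path on `k` vertices in `G`. -/
def IsInducedPathMap (G : SimpleGraph V) {k : ℕ} (f : Fin k ↪ V) : Prop :=
  ∀ i j : Fin k, G.Adj (f i) (f j) ↔ ((i : ℕ) + 1 = (j : ℕ) ∨ (j : ℕ) + 1 = (i : ℕ))

/-- `G` is `P_t`-free: no induced path on `t` vertices. -/
def PFree (t : ℕ) (G : SimpleGraph V) : Prop :=
  ¬ ∃ f : Fin t ↪ V, IsInducedPathMap G f

/-- `Ω` is a potential maximal clique. -/
def IsPMC (G : SimpleGraph V) (Ω : Set V) : Prop :=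
  (∀ D : Set V, IsCompOutside G Ω D → nbhdSet G D ≠ Ω) ∧
  (∀ u ∈ Ω, ∀ v ∈ Ω, u ≠ v → ¬ G.Adj u v →
    ∃ D : Set V, IsCompOutside G Ω D ∧ u ∈ nbhdSet G D ∧ v ∈ nbhdSet G D)

/-- `M` is a module of the induced subgraph `G[A]`. -/
def IsModuleOn (G : SimpleGraph V) (A M : Set V) : Prop :=
  M ⊆ A ∧ ∀ x ∈ M, ∀ y ∈ M, ∀ z ∈ A \ M, (G.Adj x z ↔ G.Adj y z)

/-- `M` is a strong module of `G[A]`: a proper module overlapping no other module. -/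
def IsStrongOn (G : SimpleGraph V) (A M : Set V) : Prop :=
  IsModuleOn G A M ∧ M ≠ A ∧
    ∀ M' : Set V, IsModuleOn G A M' → M ⊆ M' ∨ M' ⊆ M ∨ M ∩ M' = ∅

/-- `M` is a maximal strong module of `G[A]`. -/
def IsMaxStrongOn (G : SimpleGraph V) (A M : Set V) : Prop :=
  M.Nonempty ∧ IsStrongOn G A M ∧
    ∀ M' : Set V, M'.Nonempty → IsStrongOn G A M' → M ⊆ M' → M' = M

/-- The quotient of `G[A]` by its maximal strong modules is a clique. -/
def QuoIsCliqueOn (G : SimpleGraph V) (A : Set V) : Prop :=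
  ∀ M M' : Set V, IsMaxStrongOn G A M → IsMaxStrongOn G A M' → M ≠ M' →
    ∀ x ∈ M, ∀ y ∈ M', G.Adj x y

/-- The quotient graph of `G` by its maximal strong modules. -/
def quoGraph (G : SimpleGraph V) :
    SimpleGraph {M : Set V // IsMaxStrongOn G Set.univ M} where
  Adj M M' := M ≠ M' ∧ ∀ x ∈ M.1, ∀ y ∈ M'.1, G.Adj x y
  symm := ⟨by
    rintro M M' ⟨hne, h⟩
    exact ⟨hne.symm, fun x hx y hy => (h y hy x hx).symm⟩⟩
  loopless := ⟨fun M h => h.1 rfl⟩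

section AuxModular

variable {G : SimpleGraph V}

/-- Plain notion of module of `G`. -/
def ModOf (G : SimpleGraph V) (M : Set V) : Prop :=
  ∀ ⦃x⦄, x ∈ M → ∀ ⦃y⦄, y ∈ M → ∀ ⦃z⦄, z ∉ M → (G.Adj x z ↔ G.Adj y z)

lemma modOn_iff {M : Set V} : IsModuleOn G Set.univ M ↔ ModOf G M := by
  constructor
  · rintro ⟨-, h⟩ x hx y hy z hz
    exact h x hx y hy z ⟨trivial, hz⟩
  · intro h
    exact ⟨Set.subset_univ _, fun x hx y hy z hz => h hx hy hz.2⟩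

lemma modOf_union {M₁ M₂ : Set V} (h₁ : ModOf G M₁) (h₂ : ModOf G M₂)
    (hov : (M₁ ∩ M₂).Nonempty) : ModOf G (M₁ ∪ M₂) := by
  obtain ⟨w, hw₁, hw₂⟩ := hov
  have key : ∀ x ∈ M₁ ∪ M₂, ∀ z ∉ M₁ ∪ M₂, (G.Adj x z ↔ G.Adj w z) := by
    rintro x (hx | hx) z hz
    · exact h₁ hx hw₁ (fun h => hz (Or.inl h))
    · exact h₂ hx hw₂ (fun h => hz (Or.inr h))
  intro x hx y hy z hz
  rw [key x hx z hz, key y hy z hz]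

lemma reach_stay {A : Set V} (h : ∀ u ∈ A, ∀ v, v ∉ A → ¬ G.Adj u v) :
    ∀ {a b : V}, G.Walk a b → a ∈ A → b ∈ A := by
  intro a b w
  induction w with
  | nil => exact id
  | cons adj p ih =>
      intro ha
      apply ih
      by_contra hv
      exact h _ ha _ hv adj

lemma three_block (hconn : G.Connected) (hco : Gᶜ.Connected)
    {X Y : Set V} (hX : ModOf G X) (hY : ModOf G Y)
    (hA : (X \ Y).Nonempty) (hB : (Y \ X).Nonempty) (hC : (X ∩ Y).Nonempty)
    (hU : X ∪ Y = Set.univ) : False := by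
  obtain ⟨a₀, ha₀X, ha₀Y⟩ := hA
  obtain ⟨b₀, hb₀Y, hb₀X⟩ := hB
  obtain ⟨c₀, hc₀X, hc₀Y⟩ := hC
  set p := G.Adj a₀ b₀ with hp
  have h1 : ∀ a ∈ X \ Y, ∀ b ∈ Y \ X, (G.Adj a b ↔ p) := by
    rintro a ⟨haX, haY⟩ b ⟨hbY, hbX⟩
    have e1 : G.Adj a b ↔ G.Adj a b₀ := by
      rw [G.adj_comm a b, G.adj_comm a b₀]
      exact hY hbY hb₀Y haY
    have e2 : G.Adj a b₀ ↔ G.Adj a₀ b₀ := hX haX ha₀X hb₀X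
    exact e1.trans e2
  have h2 : ∀ a ∈ X \ Y, ∀ c ∈ X ∩ Y, (G.Adj a c ↔ p) := by
    rintro a ⟨haX, haY⟩ c ⟨hcX, hcY⟩
    have e1 : G.Adj a c ↔ G.Adj a b₀ := by
      rw [G.adj_comm a c, G.adj_comm a b₀]
      exact hY hcY hb₀Y haY
    have e2 : G.Adj a b₀ ↔ G.Adj a₀ b₀ := hX haX ha₀X hb₀X
    exact e1.trans e2
  have h3 : ∀ b ∈ Y \ X, ∀ c ∈ X ∩ Y, (G.Adj b c ↔ p) := by
    rintro b ⟨hbY, hbX⟩ c ⟨hcX, hcY⟩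
    have e1 : G.Adj b c ↔ G.Adj a₀ b := by
      rw [G.adj_comm b c]
      exact hX hcX ha₀X hbX
    have e2 : G.Adj a₀ b ↔ p := h1 a₀ ⟨ha₀X, ha₀Y⟩ b ⟨hbY, hbX⟩
    exact e1.trans e2
  have hv3 : ∀ v : V, v ∈ X \ Y ∨ v ∈ Y \ X ∨ v ∈ X ∩ Y := by
    intro v
    have hv : v ∈ X ∪ Y := hU ▸ Set.mem_univ v
    by_cases hX' : v ∈ X <;> by_cases hY' : v ∈ Y
    · exact Or.inr (Or.inr ⟨hX', hY'⟩)
    · exact Or.inl ⟨hX', hY'⟩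
    · exact Or.inr (Or.inl ⟨hY', hX'⟩)
    · exact absurd hv (by simp [hX', hY'])
  have hcross : ∀ u ∈ X \ Y, ∀ v, v ∉ X \ Y → (G.Adj u v ↔ p) := by
    intro u hu v hv
    rcases hv3 v with h | h | h
    · exact absurd h hv
    · exact h1 u hu v h
    · exact h2 u hu v h
  by_cases hp' : p
  · have hnoedge : ∀ u ∈ X \ Y, ∀ v, v ∉ X \ Y → ¬ Gᶜ.Adj u v := by
      intro u hu v hv hadj
      exact hadj.2 ((hcross u hu v hv).mpr hp')
    obtain ⟨w⟩ := hco.preconnected a₀ b₀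
    exact hb₀X (reach_stay hnoedge w ⟨ha₀X, ha₀Y⟩).1
  · have hnoedge : ∀ u ∈ X \ Y, ∀ v, v ∉ X \ Y → ¬ G.Adj u v := by
      intro u hu v hv hadj
      exact hp' ((hcross u hu v hv).mp hadj)
    obtain ⟨w⟩ := hconn.preconnected a₀ b₀
    exact hb₀X (reach_stay hnoedge w ⟨ha₀X, ha₀Y⟩).1

lemma exists_maxproper [Fintype V] {M₀ : Set V} (h₀ : ModOf G M₀) (hne : M₀ ≠ Set.univ) :
    ∃ W : Set V, ModOf G W ∧ W ≠ Set.univ ∧ M₀ ⊆ W ∧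
      ∀ W', ModOf G W' → W' ≠ Set.univ → W ⊆ W' → W' = W := by
  classical
  have hfin : {W : Set V | ModOf G W ∧ W ≠ Set.univ ∧ M₀ ⊆ W}.Finite := Set.toFinite _
  have hnes : {W : Set V | ModOf G W ∧ W ≠ Set.univ ∧ M₀ ⊆ W}.Nonempty :=
    ⟨M₀, h₀, hne, subset_rfl⟩
  obtain ⟨W, hW, hmax⟩ := Set.Finite.exists_maximalFor Set.ncard _ hfin hnes
  refine ⟨W, hW.1, hW.2.1, hW.2.2, ?_⟩
  intro W' hW' hW'ne hsub
  have hW'mem : W' ∈ {W : Set V | ModOf G W ∧ W ≠ Set.univ ∧ M₀ ⊆ W} :=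
    ⟨hW', hW'ne, hW.2.2.trans hsub⟩
  have hle : W.ncard ≤ W'.ncard := Set.ncard_le_ncard hsub (Set.toFinite _)
  have heq : W.ncard = W'.ncard := le_antisymm hle (hmax hW'mem hle)
  exact (Set.eq_of_subset_of_ncard_le hsub heq.ge (Set.toFinite _)).symm

lemma maxproper_isMaxStrong [Fintype V] (hconn : G.Connected) (hco : Gᶜ.Connected)
    {W : Set V} (hW : ModOf G W) (hWne : W ≠ Set.univ) (hWnonempty : W.Nonempty)
    (hmax : ∀ W', ModOf G W' → W' ≠ Set.univ → W ⊆ W' → W' = W) :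
    IsMaxStrongOn G Set.univ W := by
  refine ⟨hWnonempty, ⟨modOn_iff.mpr hW, hWne, ?_⟩, ?_⟩
  · intro M' hM'
    rw [modOn_iff] at hM'
    by_cases hM'univ : M' = Set.univ
    · exact Or.inl (hM'univ ▸ Set.subset_univ _)
    by_cases hss : W ⊆ M'
    · exact Or.inl hss
    by_cases hss' : M' ⊆ W
    · exact Or.inr (Or.inl hss')
    refine Or.inr (Or.inr ?_)
    by_contra hI
    have hov : (W ∩ M').Nonempty := Set.nonempty_iff_ne_empty.mpr hI
    have hU : ModOf G (W ∪ M') := modOf_union hW hM' hov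
    by_cases hUuniv : W ∪ M' = Set.univ
    · exact three_block hconn hco hW hM' (Set.diff_nonempty.mpr hss)
        (Set.diff_nonempty.mpr hss') hov hUuniv
    · have heq := hmax _ hU hUuniv Set.subset_union_left
      exact hss' (heq ▸ Set.subset_union_right)
  · intro M' _ hM'strong hsub
    exact hmax M' (modOn_iff.mp hM'strong.1) hM'strong.2.1 hsub

lemma exists_maxStrong_mem [Fintype V] [Nontrivial V]
    (hconn : G.Connected) (hco : Gᶜ.Connected) (v : V) :
    ∃ M : Set V, IsMaxStrongOn G Set.univ M ∧ v ∈ M := by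
  have hv : ModOf G {v} := by
    intro x hx y hy z hz
    rw [Set.mem_singleton_iff] at hx hy
    rw [hx, hy]
  have hne : ({v} : Set V) ≠ Set.univ := by
    obtain ⟨w, hw⟩ := exists_ne v
    intro h
    exact hw (Set.eq_of_mem_singleton (h ▸ Set.mem_univ w))
  obtain ⟨W, hW, hWne, hsub, hmaxW⟩ := exists_maxproper hv hne
  have hvW : v ∈ W := hsub rfl
  exact ⟨W, maxproper_isMaxStrong hconn hco hW hWne ⟨v, hvW⟩ hmaxW, hvW⟩

lemma eq_of_maxStrong_subset [Fintype V] (hconn : G.Connected) (hco : Gᶜ.Connected)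
    {M W : Set V} (hM : IsMaxStrongOn G Set.univ M) (hW : ModOf G W)
    (hWne : W ≠ Set.univ) (hsub : M ⊆ W) : W = M := by
  obtain ⟨W₀, hW₀, hW₀ne, hsub₀, hmax₀⟩ := exists_maxproper hW hWne
  have hW₀nonempty : W₀.Nonempty := hM.1.mono (hsub.trans hsub₀)
  have hW₀max : IsMaxStrongOn G Set.univ W₀ :=
    maxproper_isMaxStrong hconn hco hW₀ hW₀ne hW₀nonempty hmax₀
  have : W₀ = M := hM.2.2 W₀ hW₀nonempty hW₀max.2.1 (hsub.trans hsub₀)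
  exact Set.Subset.antisymm (this ▸ hsub₀) hsub

lemma maxStrong_disjoint {M M' : Set V}
    (hM : IsMaxStrongOn G Set.univ M) (hM' : IsMaxStrongOn G Set.univ M')
    (hne : M ≠ M') : M ∩ M' = ∅ := by
  rcases hM.2.1.2.2 M' hM'.2.1.1 with h | h | h
  · exact absurd (hM.2.2 M' hM'.1 hM'.2.1 h) (fun he => hne he.symm)
  · exact absurd (hM'.2.2 M hM.1 hM.2.1 h) hne
  · exact h

lemma adj_iff_quoAdj {M M' : {M : Set V // IsMaxStrongOn G Set.univ M}}
    (hne : M ≠ M') {x y : V} (hx : x ∈ M.1) (hy : y ∈ M'.1) :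
    (G.Adj x y ↔ (quoGraph G).Adj M M') := by
  have hsets : M.1 ≠ M'.1 := fun h => hne (Subtype.ext h)
  have hdisj := maxStrong_disjoint M.2 M'.2 hsets
  have hmodM : ModOf G M.1 := modOn_iff.mp M.2.2.1.1
  have hmodM' : ModOf G M'.1 := modOn_iff.mp M'.2.2.1.1
  constructor
  · intro hadj
    refine ⟨hne, fun x' hx' y' hy' => ?_⟩
    have hy'M : y' ∉ M.1 := fun h => (hdisj ▸ Set.mem_inter h hy' : y' ∈ (∅ : Set V))
    have hyM : y ∉ M.1 := fun h => (hdisj ▸ Set.mem_inter h hy : y ∈ (∅ : Set V))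
    have hxM' : x ∉ M'.1 := fun h => (hdisj ▸ Set.mem_inter hx h : x ∈ (∅ : Set V))
    have e1 : G.Adj x' y' ↔ G.Adj x y' := hmodM hx' hx hy'M
    have e2 : G.Adj x y' ↔ G.Adj x y := by
      rw [G.adj_comm x y', G.adj_comm x y]
      exact hmodM' hy' hy hxM'
    exact (e1.trans e2).mpr hadj
  · intro h
    exact h.2 x hx y hy

end AuxModular

/-- If `G` and its complement are connected and `|V(G)| > 1`, then the quotient graph
of `G` by its maximal strong modules is prime: all its modules are trivial. -/
theorem stmt_16 [Fintype V] [Nontrivial V] (G : SimpleGraph V)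
    (hconn : G.Connected) (hcoconn : Gᶜ.Connected) :
    ∀ N : Set {M : Set V // IsMaxStrongOn G Set.univ M},
      (∀ a ∈ N, ∀ b ∈ N, ∀ c ∉ N, ((quoGraph G).Adj a c ↔ (quoGraph G).Adj b c)) →
      N = ∅ ∨ (∃ M, N = {M}) ∨ N = Set.univ := by
  intro N hN
  by_cases hsub : N.Subsingleton
  · rcases hsub.eq_empty_or_singleton with h | ⟨M, h⟩
    · exact Or.inl h
    · exact Or.inr (Or.inl ⟨M, h⟩)
  by_cases hNuniv : N = Set.univ
  · exact Or.inr (Or.inr hNuniv)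
  exfalso
  obtain ⟨M1, hM1N, M2, hM2N, hM12⟩ := Set.not_subsingleton_iff.mp hsub
  obtain ⟨M3, hM3N⟩ := (Set.ne_univ_iff_exists_notMem _).mp hNuniv
  set U : Set V := ⋃ M ∈ N, (M : Set V) with hUdef
  have hmemU : ∀ {v : V} {M : {M : Set V // IsMaxStrongOn G Set.univ M}},
      M ∈ N → v ∈ M.1 → v ∈ U := by
    intro v M hM hv
    exact Set.mem_biUnion hM hv
  have hmodU : ModOf G U := by
    intro x hx y hy z hz
    simp only [hUdef, Set.mem_iUnion] at hx hy
    obtain ⟨Mx, hMxN, hxMx⟩ := hx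
    obtain ⟨My, hMyN, hyMy⟩ := hy
    obtain ⟨Mz0, hMz0, hzMz0⟩ := exists_maxStrong_mem hconn hcoconn z
    set Mz : {M : Set V // IsMaxStrongOn G Set.univ M} := ⟨Mz0, hMz0⟩ with hMzdef
    have hMzN : Mz ∉ N := fun h => hz (hmemU h hzMz0)
    have hMxz : Mx ≠ Mz := fun h => hz (hmemU hMxN (by rw [h]; exact hzMz0))
    have hMyz : My ≠ Mz := fun h => hz (hmemU hMyN (by rw [h]; exact hzMz0))
    calc G.Adj x z ↔ (quoGraph G).Adj Mx Mz := adj_iff_quoAdj hMxz hxMx hzMz0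
      _ ↔ (quoGraph G).Adj My Mz := hN Mx hMxN My hMyN Mz hMzN
      _ ↔ G.Adj y z := (adj_iff_quoAdj hMyz hyMy hzMz0).symm
  have hUne : U ≠ Set.univ := by
    obtain ⟨z₀, hz₀⟩ := M3.2.1
    rw [Set.ne_univ_iff_exists_notMem]
    refine ⟨z₀, ?_⟩
    intro hmem
    simp only [hUdef, Set.mem_iUnion] at hmem
    obtain ⟨M, hMN, hz₀M⟩ := hmem
    have hne : M.1 ≠ M3.1 := fun h => hM3N ((Subtype.ext h : M = M3) ▸ hMN)
    have := maxStrong_disjoint M.2 M3.2 hne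
    exact (this ▸ Set.mem_inter hz₀M hz₀ : z₀ ∈ (∅ : Set V))
  have hsubU : M1.1 ⊆ U := fun v hv => hmemU hM1N hv
  have hUeq : U = M1.1 := eq_of_maxStrong_subset hconn hcoconn M1.2 hmodU hUne hsubU
  obtain ⟨w, hw⟩ := M2.2.1
  have hwU : w ∈ U := hmemU hM2N hw
  have hne21 : M2.1 ≠ M1.1 := fun h => hM12 (Subtype.ext h).symm
  have hdisj := maxStrong_disjoint M2.2 M1.2 hne21
  exact (hdisj ▸ Set.mem_inter hw (hUeq ▸ hwU) : w ∈ (∅ : Set V))
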